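/- arXiv:1606.09155 — 2 statements merged into one kernel-verified Lean document; each statement's English description precedes it below -/
import Mathlib

section
/- (O(1/t) ergodic rate of linearized ALM with constant parameters.) Under the setting of the constant-parameter linearized ALM — β > 0, γ ∈ (0, 2β), P self-adjoint with P − L_f·I positive definite, λ¹ = 0, and for each k ≥ 1 there is a subgradient uᵏ of g at x^{k+1} with ∇f(xᵏ) + uᵏ − A*λᵏ + β A*(A x^{k+1} − b) + P(x^{k+1} − xᵏ) = 0 and λ^{k+1} = λᵏ − γ(A x^{k+1} − b) — let (x*, λ*) satisfy the KKT conditions with λ* ≠ 0, and for t ≥ 1 set x̃^{t+1} = (1/t)∑_{k=1}^t x^{k+1}. Then |F(x̃^{t+1}) − F(x*)| ≤ (1/t)·(½‖x¹ − x*‖²_P + 2‖λ*‖²/γ) and ‖A x̃^{t+1} − b‖ ≤ (1/(t‖λ*‖))·(½‖x¹ − x*‖²_P + 2‖λ*‖²/γ). -/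
open scoped RealInnerProductSpace

section aux
variable {E : Type*} [NormedAddCommGroup E] [InnerProductSpace ℝ E] [CompleteSpace E]

lemma aux_line_hasDerivAt (f : E → ℝ) (f' : E → E) (hgrad : ∀ p, HasGradientAt f (f' p) p)
    (x d : E) (s : ℝ) :
    HasDerivAt (fun s : ℝ => f (x + s • d)) ⟪f' (x + s • d), d⟫ s := by
  have hc : HasDerivAt (fun s : ℝ => x + s • d) d s := by
    simpa using ((hasDerivAt_id s).smul_const d).const_add x
  have := (hgrad (x + s • d)).hasFDerivAt.comp_hasDerivAt s hc
  simp at this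
  exact this

/-- First-order condition for convex differentiable functions. -/
lemma aux_grad_ineq {f : E → ℝ} {f' : E → E} (hconv : ConvexOn ℝ Set.univ f)
    (hgrad : ∀ p, HasGradientAt f (f' p) p) (x y : E) :
    f x + ⟪f' x, y - x⟫ ≤ f y := by
  set d := y - x with hd
  have hφconv : ConvexOn ℝ Set.univ (fun s : ℝ => f (x + s • d)) := by
    have h0 := hconv.comp_affineMap (AffineMap.lineMap x y)
    have h2 : ∀ s : ℝ, x + s • d = s • (y -ᵥ x) +ᵥ x := fun s => by
      rw [hd]; simp only [vsub_eq_sub, vadd_eq_add]; abel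
    simp only [Function.comp_def, AffineMap.coe_lineMap, Set.preimage_univ] at h0
    simp only [h2]
    exact h0
  have hderiv : HasDerivAt (fun s : ℝ => f (x + s • d)) ⟪f' x, d⟫ 0 := by
    simpa using aux_line_hasDerivAt f f' hgrad x d 0
  have hs := hφconv.le_slope_of_hasDerivAt (Set.mem_univ 0) (Set.mem_univ 1) zero_lt_one hderiv
  have : slope (fun s : ℝ => f (x + s • d)) 0 1 = f y - f x := by
    simp [slope_def_field, hd]
  rw [this] at hs
  linarith

/-- Descent lemma. -/
lemma aux_descent {f : E → ℝ} {f' : E → E} {Lf : ℝ}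
    (hgrad : ∀ p, HasGradientAt f (f' p) p)
    (hlip : ∀ p q, ‖f' p - f' q‖ ≤ Lf * ‖p - q‖) (x y : E) :
    f y ≤ f x + ⟪f' x, y - x⟫ + Lf / 2 * ‖y - x‖ ^ 2 := by
  set d := y - x with hd
  set ψ : ℝ → ℝ := fun s => f (x + s • d) - s * ⟪f' x, d⟫ - Lf * s ^ 2 / 2 * ‖d‖ ^ 2 with hψ
  have hψ' : ∀ s : ℝ, HasDerivAt ψ
      (⟪f' (x + s • d), d⟫ - ⟪f' x, d⟫ - Lf * s * ‖d‖ ^ 2) s := by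
    intro s
    have h1 := aux_line_hasDerivAt f f' hgrad x d s
    have h2 : HasDerivAt (fun s : ℝ => s * ⟪f' x, d⟫) ⟪f' x, d⟫ s := by
      simpa using (hasDerivAt_id s).mul_const ⟪f' x, d⟫
    have h3 : HasDerivAt (fun s : ℝ => Lf * s ^ 2 / 2 * ‖d‖ ^ 2) (Lf * s * ‖d‖ ^ 2) s := by
      have : HasDerivAt (fun s : ℝ => s ^ 2) (2 * s) s := by
        simpa using hasDerivAt_pow 2 s
      have := ((this.const_mul Lf).div_const 2).mul_const (‖d‖ ^ 2)
      exact this.congr_deriv (by ring)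
    exact (h1.sub h2).sub h3
  have hanti : AntitoneOn ψ (Set.Icc 0 1) := by
    apply antitoneOn_of_deriv_nonpos (convex_Icc 0 1)
    · exact (Differentiable.continuous fun s => (hψ' s).differentiableAt).continuousOn
    · exact Differentiable.differentiableOn fun s => (hψ' s).differentiableAt
    · intro s hs
      rw [interior_Icc] at hs
      rw [(hψ' s).deriv]
      have hib : ⟪f' (x + s • d) - f' x, d⟫ ≤ ‖f' (x + s • d) - f' x‖ * ‖d‖ :=
        real_inner_le_norm _ _
      have hlb : ‖f' (x + s • d) - f' x‖ ≤ Lf * (s * ‖d‖) := by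
        have := hlip (x + s • d) x
        simpa [norm_smul, abs_of_pos hs.1] using this
      have hd0 : (0:ℝ) ≤ ‖d‖ := norm_nonneg _
      have := hib.trans (mul_le_mul_of_nonneg_right hlb hd0)
      rw [inner_sub_left] at this
      nlinarith
  have := hanti (Set.mem_Icc.2 ⟨le_refl 0, zero_le_one⟩) (Set.mem_Icc.2 ⟨zero_le_one, le_refl 1⟩)
      zero_le_one
  simp only [hψ, one_smul, zero_smul, add_zero, one_pow, zero_pow, mul_zero, zero_mul,
    mul_one, sub_zero] at this
  have hxy : x + d = y := by rw [hd]; abel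
  rw [hxy] at this
  linarith

/-- telescoping -/
lemma aux_telescope (c : ℕ → ℝ) (t : ℕ) :
    ∑ k ∈ Finset.Icc 1 t, (c k - c (k+1)) = c 1 - c (t+1) := by
  induction t with
  | zero => simp
  | succ n ih =>
      rw [Finset.sum_Icc_succ_top (Nat.le_add_left 1 n), ih]
      ring

end aux

set_option maxHeartbeats 1000000 in
/-- O(1/t) ergodic rate of the linearized ALM with constant parameters. -/
theorem stmt_6 {E H : Type*}
    [NormedAddCommGroup E] [InnerProductSpace ℝ E] [FiniteDimensional ℝ E]
    [NormedAddCommGroup H] [InnerProductSpace ℝ H] [FiniteDimensional ℝ H]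
    (A : E →L[ℝ] H) (b : H)
    (f : E → ℝ) (f' : E → E) (Lf : ℝ) (hLf : 0 ≤ Lf)
    (hfconv : ConvexOn ℝ Set.univ f)
    (hgrad : ∀ x : E, HasGradientAt f (f' x) x)
    (hlip : ∀ x x' : E, ‖f' x - f' x'‖ ≤ Lf * ‖x - x'‖)
    (g : E → ℝ) (hgconv : ConvexOn ℝ Set.univ g)
    (β γ : ℝ) (hβ : 0 < β) (hγ0 : 0 < γ) (hγ2 : γ < 2 * β)
    (P : E →L[ℝ] E) (hP : IsSelfAdjoint P)
    (hPpd : ∀ v : E, v ≠ 0 → Lf * ‖v‖ ^ 2 < ⟪v, P v⟫)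
    (x : ℕ → E) (lam : ℕ → H)
    (hlam1 : lam 1 = 0)
    (hopt : ∀ k : ℕ, 1 ≤ k → ∃ u : E,
      (∀ x' : E, g x' ≥ g (x (k+1)) + ⟪u, x' - x (k+1)⟫) ∧
      f' (x k) + u - (ContinuousLinearMap.adjoint A) (lam k)
        + β • (ContinuousLinearMap.adjoint A) (A (x (k+1)) - b)
        + P (x (k+1) - x k) = 0)
    (hlam : ∀ k : ℕ, 1 ≤ k → lam (k+1) = lam k - γ • (A (x (k+1)) - b))
    (xs : E) (ls : H)
    (hfeas : A xs = b) (hls : ls ≠ 0)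
    (hkkt : ∀ x' : E, g x' ≥ g xs + ⟪(ContinuousLinearMap.adjoint A) ls - f' xs, x' - xs⟫) :
    ∀ t : ℕ, 1 ≤ t → ∀ xt : E,
      xt = (t : ℝ)⁻¹ • ∑ k ∈ Finset.Icc 1 t, x (k+1) →
      |(f xt + g xt) - (f xs + g xs)|
          ≤ (1 / (t : ℝ)) * ((1 / 2) * ⟪x 1 - xs, P (x 1 - xs)⟫ + 2 * ‖ls‖ ^ 2 / γ) ∧
      ‖A xt - b‖
          ≤ (1 / ((t : ℝ) * ‖ls‖)) * ((1 / 2) * ⟪x 1 - xs, P (x 1 - xs)⟫ + 2 * ‖ls‖ ^ 2 / γ) := by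
  intro t ht xt hxt
  have ht0 : (0:ℝ) < t := by exact_mod_cast Nat.pos_of_ne_zero (by omega)
  have htne : (t:ℝ) ≠ 0 := ne_of_gt ht0
  have hls' : (0:ℝ) < ‖ls‖ := norm_pos_iff.2 hls
  have hγne : γ ≠ 0 := ne_of_gt hγ0
  have hQpos : ∀ v : E, Lf * ‖v‖ ^ 2 ≤ ⟪v, P v⟫ := by
    intro v
    rcases eq_or_ne v 0 with h | h
    · simp [h]
    · exact (hPpd v h).le
  have hQ0 : ∀ v : E, (0:ℝ) ≤ ⟪v, P v⟫ := fun v =>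
    le_trans (by positivity) (hQpos v)
  have hsym : ∀ v w : E, ⟪P v, w⟫ = ⟪v, P w⟫ := fun v w => hP.isSymmetric v w
  -- key per-step inequality
  have key : ∀ (l : H) (k : ℕ), 1 ≤ k →
      2*γ*(((f (x (k+1)) + g (x (k+1))) - (f xs + g xs)) - ⟪l, A (x (k+1)) - b⟫)
      ≤ (γ * ⟪x k - xs, P (x k - xs)⟫ + ‖lam k - l‖^2)
        - (γ * ⟪x (k+1) - xs, P (x (k+1) - xs)⟫ + ‖lam (k+1) - l‖^2) := by
    intro l k hk
    obtain ⟨u, hu, heq⟩ := hopt k hk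
    have hf1 : f (x (k+1)) ≤ f (x k) + ⟪f' (x k), x (k+1) - x k⟫
        + Lf/2*‖x (k+1) - x k‖^2 := aux_descent hgrad hlip _ _
    have hf2 : f (x k) + ⟪f' (x k), xs - x k⟫ ≤ f xs := aux_grad_ineq hfconv hgrad _ _
    have hg' : g xs ≥ g (x (k+1)) + ⟪u, xs - x (k+1)⟫ := hu xs
    have hgneg : ⟪u, xs - x (k+1)⟫ = - ⟪u, x (k+1) - xs⟫ := by
      rw [← inner_neg_right]; congr 1; abel
    have h1 : f' (x k) + u = (ContinuousLinearMap.adjoint A) (lam k)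
        - β • (ContinuousLinearMap.adjoint A) (A (x (k+1)) - b) - P (x (k+1) - x k) := by
      rw [← sub_eq_zero, show f' (x k) + u - ((ContinuousLinearMap.adjoint A) (lam k)
        - β • (ContinuousLinearMap.adjoint A) (A (x (k+1)) - b) - P (x (k+1) - x k))
        = f' (x k) + u - (ContinuousLinearMap.adjoint A) (lam k)
          + β • (ContinuousLinearMap.adjoint A) (A (x (k+1)) - b)
          + P (x (k+1) - x k) from by abel]
      exact heq
    have hadd : ⟪f' (x k) + u, x (k+1) - xs⟫
        = ⟪f' (x k), x (k+1) - xs⟫ + ⟪u, x (k+1) - xs⟫ := inner_add_left _ _ _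
    have hsplit : ⟪f' (x k), x (k+1) - xs⟫
        = ⟪f' (x k), x (k+1) - x k⟫ - ⟪f' (x k), xs - x k⟫ := by
      rw [← inner_sub_right]; congr 1; abel
    have hinner : ⟪f' (x k) + u, x (k+1) - xs⟫
        = ⟪lam k, A (x (k+1)) - b⟫ - β * ‖A (x (k+1)) - b‖^2
          - ⟪P (x (k+1) - x k), x (k+1) - xs⟫ := by
      rw [h1, inner_sub_left, inner_sub_left, real_inner_smul_left,
        ContinuousLinearMap.adjoint_inner_left, ContinuousLinearMap.adjoint_inner_left,
        map_sub, hfeas, real_inner_self_eq_norm_sq]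
    have hPid : 2 * ⟪P (x (k+1) - x k), x (k+1) - xs⟫
        = ⟪x (k+1) - xs, P (x (k+1) - xs)⟫ - ⟪x k - xs, P (x k - xs)⟫
          + ⟪x (k+1) - x k, P (x (k+1) - x k)⟫ := by
      have e1 : x (k+1) - x k = (x (k+1) - xs) - (x k - xs) := by abel
      rw [e1]
      set a := x (k+1) - xs
      set c := x k - xs
      have h3 : ⟪P a, a⟫ = ⟪a, P a⟫ := hsym a a
      have h4 : ⟪P c, a⟫ = ⟪c, P a⟫ := hsym c a
      have h5 : ⟪a, P c⟫ = ⟪c, P a⟫ := (real_inner_comm (P c) a).trans (hsym c a)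
      simp only [map_sub, inner_sub_left, inner_sub_right]
      linarith
    have hlamexp : lam (k+1) - l = (lam k - l) - γ • (A (x (k+1)) - b) := by
      rw [hlam k hk]; abel
    have hlamid : ‖lam (k+1) - l‖^2
        = ‖lam k - l‖^2 - 2*(γ*⟪lam k - l, A (x (k+1)) - b⟫)
          + γ^2*‖A (x (k+1)) - b‖^2 := by
      rw [hlamexp, norm_sub_sq_real, real_inner_smul_right, norm_smul]
      simp [abs_of_pos hγ0]
      ring
    have hsubl : ⟪lam k, A (x (k+1)) - b⟫ - ⟪l, A (x (k+1)) - b⟫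
        = ⟪lam k - l, A (x (k+1)) - b⟫ := (inner_sub_left _ _ _).symm
    have hdpos : Lf * ‖x (k+1) - x k‖^2 ≤ ⟪x (k+1) - x k, P (x (k+1) - x k)⟫ := hQpos _
    have hstep : ((f (x (k+1)) + g (x (k+1))) - (f xs + g xs)) - ⟪l, A (x (k+1)) - b⟫
        ≤ ⟪lam k - l, A (x (k+1)) - b⟫ - β * ‖A (x (k+1)) - b‖^2
          - ⟪P (x (k+1) - x k), x (k+1) - xs⟫ + Lf/2*‖x (k+1) - x k‖^2 := by
      linarith
    have p1 := mul_le_mul_of_nonneg_left hstep (by positivity : (0:ℝ) ≤ 2*γ)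
    have p2 : γ * (2 * ⟪P (x (k+1) - x k), x (k+1) - xs⟫)
        = γ * (⟪x (k+1) - xs, P (x (k+1) - xs)⟫ - ⟪x k - xs, P (x k - xs)⟫
          + ⟪x (k+1) - x k, P (x (k+1) - x k)⟫) := by rw [hPid]
    have hγγ : γ^2 ≤ 2*γ*β := by nlinarith [hγ0, hγ2]
    have p4 : γ^2*‖A (x (k+1)) - b‖^2 ≤ 2*γ*(β*‖A (x (k+1)) - b‖^2) := by
      have := mul_le_mul_of_nonneg_right hγγ (sq_nonneg ‖A (x (k+1)) - b‖)
      linarith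
    have hd' : γ*(Lf * ‖x (k+1) - x k‖^2) ≤ γ*⟪x (k+1) - x k, P (x (k+1) - x k)⟫ :=
      mul_le_mul_of_nonneg_left hdpos hγ0.le
    linarith [p1, p2, hlamid, p4, hd']
  -- summation
  have hcard : (Finset.Icc 1 t).card = t := by rw [Nat.card_Icc]; omega
  have hAxt : (t:ℝ) • A xt = A (∑ k ∈ Finset.Icc 1 t, x (k+1)) := by
    rw [hxt, map_smul, smul_smul, mul_inv_cancel₀ htne, one_smul]
  have hrsum : ∑ k ∈ Finset.Icc 1 t, (A (x (k+1)) - b) = (t:ℝ) • (A xt - b) := by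
    rw [smul_sub, hAxt, Finset.sum_sub_distrib, Finset.sum_const, hcard, ← map_sum]
    congr 1
    exact (Nat.cast_smul_eq_nsmul ℝ t b).symm
  have hjensen : (t:ℝ) * (f xt + g xt)
      ≤ ∑ k ∈ Finset.Icc 1 t, (f (x (k+1)) + g (x (k+1))) := by
    have hF : ConvexOn ℝ Set.univ (fun z => f z + g z) := hfconv.add hgconv
    have hw : ∑ _k ∈ Finset.Icc 1 t, (t:ℝ)⁻¹ = 1 := by
      rw [Finset.sum_const, hcard, nsmul_eq_mul, mul_inv_cancel₀ htne]
    have hJ := hF.map_sum_le (w := fun _ => (t:ℝ)⁻¹) (p := fun k => x (k+1))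
      (fun i _ => by positivity) hw (fun i _ => Set.mem_univ _)
    rw [← Finset.smul_sum, ← hxt] at hJ
    simp only [smul_eq_mul] at hJ
    rw [← Finset.mul_sum] at hJ
    calc (t:ℝ) * (f xt + g xt)
        ≤ (t:ℝ) * ((t:ℝ)⁻¹ * ∑ k ∈ Finset.Icc 1 t, (f (x (k+1)) + g (x (k+1)))) :=
          mul_le_mul_of_nonneg_left hJ ht0.le
      _ = ∑ k ∈ Finset.Icc 1 t, (f (x (k+1)) + g (x (k+1))) := by
          rw [← mul_assoc, mul_inv_cancel₀ htne, one_mul]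
  have hkey2 : ∀ l : H,
      2*γ*((t:ℝ)*((f xt + g xt) - (f xs + g xs) - ⟪l, A xt - b⟫))
      ≤ γ * ⟪x 1 - xs, P (x 1 - xs)⟫ + ‖l‖^2 := by
    intro l
    have hsum := Finset.sum_le_sum (s := Finset.Icc 1 t)
      (f := fun k => 2*γ*(((f (x (k+1)) + g (x (k+1))) - (f xs + g xs))
        - ⟪l, A (x (k+1)) - b⟫))
      (g := fun k => (γ * ⟪x k - xs, P (x k - xs)⟫ + ‖lam k - l‖^2)
        - (γ * ⟪x (k+1) - xs, P (x (k+1) - xs)⟫ + ‖lam (k+1) - l‖^2))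
      (fun k hk => key l k (Finset.mem_Icc.1 hk).1)
    rw [aux_telescope (fun k => γ * ⟪x k - xs, P (x k - xs)⟫ + ‖lam k - l‖^2) t] at hsum
    have hL : ∑ k ∈ Finset.Icc 1 t,
        (2*γ*(((f (x (k+1)) + g (x (k+1))) - (f xs + g xs)) - ⟪l, A (x (k+1)) - b⟫))
        = 2*γ*((∑ k ∈ Finset.Icc 1 t, (f (x (k+1)) + g (x (k+1))))
            - (t:ℝ)*(f xs + g xs) - (t:ℝ)*⟪l, A xt - b⟫) := by
      rw [← Finset.mul_sum]
      congr 1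
      rw [Finset.sum_sub_distrib, Finset.sum_sub_distrib, Finset.sum_const, hcard,
        ← inner_sum, hrsum, real_inner_smul_right, nsmul_eq_mul]
    rw [hL] at hsum
    have hend : (0:ℝ) ≤ γ * ⟪x (t+1) - xs, P (x (t+1) - xs)⟫ + ‖lam (t+1) - l‖^2 :=
      add_nonneg (mul_nonneg hγ0.le (hQ0 _)) (sq_nonneg _)
    have hl1 : ‖lam 1 - l‖^2 = ‖l‖^2 := by rw [hlam1, zero_sub, norm_neg]
    rw [hl1] at hsum
    have hJ2 := mul_le_mul_of_nonneg_left hjensen (by positivity : (0:ℝ) ≤ 2*γ)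
    linarith [hsum, hJ2, hend]
  -- lower bound from KKT
  have hlower : ⟪ls, A xt - b⟫ ≤ (f xt + g xt) - (f xs + g xs) := by
    have h1 : f xs + ⟪f' xs, xt - xs⟫ ≤ f xt := aux_grad_ineq hfconv hgrad xs xt
    have h2 := hkkt xt
    have h3 : ⟪(ContinuousLinearMap.adjoint A) ls - f' xs, xt - xs⟫
        = ⟪ls, A xt - b⟫ - ⟪f' xs, xt - xs⟫ := by
      rw [inner_sub_left, ContinuousLinearMap.adjoint_inner_left, map_sub, hfeas]
    rw [h3] at h2
    linarith
  have hcs : -(‖ls‖*‖A xt - b‖) ≤ ⟪ls, A xt - b⟫ := by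
    have h1 := abs_real_inner_le_norm ls (A xt - b)
    have h2 := neg_abs_le (⟪ls, A xt - b⟫)
    linarith
  -- choose the test multiplier
  obtain ⟨l0, hnorm, hip⟩ : ∃ l0 : H, ‖l0‖ = 2*‖ls‖ ∧ ⟪l0, A xt - b⟫ = -(2*‖ls‖*‖A xt - b‖) := by
    rcases eq_or_ne (A xt - b) 0 with h | h
    · refine ⟨(2:ℝ) • ls, ?_, ?_⟩
      · rw [norm_smul]; simp
      · simp [h]
    · have hne : ‖A xt - b‖ ≠ 0 := norm_ne_zero_iff.2 h
      refine ⟨(-(2*‖ls‖/‖A xt - b‖)) • (A xt - b), ?_, ?_⟩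
      · rw [norm_smul, Real.norm_eq_abs, abs_neg, abs_of_nonneg (by positivity),
          div_mul_cancel₀ _ hne]
      · rw [real_inner_smul_left, real_inner_self_eq_norm_sq]
        field_simp
  have hfin := hkey2 l0
  rw [hip, hnorm] at hfin
  -- clear the 2γ factor
  set D := (f xt + g xt) - (f xs + g xs) with hD
  set ρ := ‖A xt - b‖ with hρ
  set C := (1/2) * ⟪x 1 - xs, P (x 1 - xs)⟫ + 2 * ‖ls‖^2 / γ with hC
  have hCid : γ * ⟪x 1 - xs, P (x 1 - xs)⟫ + (2*‖ls‖)^2 = 2*γ*C := by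
    rw [hC]; field_simp
  rw [hCid] at hfin
  have hA' : (t:ℝ)*(D - -(2*‖ls‖*ρ)) ≤ C := by
    have h2γ : (0:ℝ) < 2*γ := by positivity
    exact le_of_mul_le_mul_left hfin h2γ
  have hρ0 : (0:ℝ) ≤ ρ := norm_nonneg _
  have hlow : -(‖ls‖*ρ) ≤ D := le_trans hcs hlower
  have htρ : (t:ℝ)*(‖ls‖*ρ) ≤ C := by
    nlinarith [mul_le_mul_of_nonneg_left hlow ht0.le]
  have htls : (0:ℝ) < (t:ℝ) * ‖ls‖ := mul_pos ht0 hls'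
  constructor
  · rw [abs_le]
    constructor
    · have h1 : -C ≤ (t:ℝ)*D := by
        nlinarith [mul_le_mul_of_nonneg_left hlow ht0.le, htρ]
      rw [one_div, inv_mul_eq_div, neg_le, le_div_iff₀ ht0]
      linarith
    · have h1 : (t:ℝ)*D ≤ C := by
        nlinarith [hA', mul_nonneg (mul_nonneg ht0.le hls'.le) hρ0]
      rw [one_div, inv_mul_eq_div, le_div_iff₀ ht0]
      linarith
  · rw [one_div, inv_mul_eq_div, le_div_iff₀ htls]
    nlinarith [htρ]
end

section
/- (Key telescoped bound for accelerated linearized ALM.) Let γ > 0 and η ≥ 2 L_f. Let (xᵏ)_{k≥1}, (x̄ᵏ)_{k≥1} ⊂ E and (λᵏ)_{k≥1} ⊂ H satisfy x̄¹ = x¹ and, for each k ≥ 1 with α_k = 2/(k+1), γ_k = kγ, β_k ≥ γ_k/2, and Pᵏ = (η/k)·I: x̂ᵏ = (1−α_k)x̄ᵏ + α_k xᵏ; there is a subgradient uᵏ of g at x^{k+1} with ∇f(x̂ᵏ) + uᵏ − A*λᵏ + β_k A*(A x^{k+1} − b) + (η/k)(x^{k+1} − xᵏ) = 0; x̄^{k+1}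 = (1−α_k)x̄ᵏ + α_k x^{k+1}; λ^{k+1} = λᵏ − γ_k(A x^{k+1} − b). Then for every t ≥ 1, every x ∈ E with A x = b, and every λ ∈ H: t(t+1)·[F(x̄^{t+1}) − F(x) − ⟨λ, A x̄^{t+1} − b⟩] ≤ η‖x¹ − x‖² + (1/γ)‖λ¹ − λ‖². -/
open scoped RealInnerProductSpace

section Aux
variable {E : Type*} [NormedAddCommGroup E] [InnerProductSpace ℝ E] [CompleteSpace E]

lemma line_hasDerivAt {f : E → ℝ} {f' : E → E} (hgrad : ∀ p, HasGradientAt f (f' p) p)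
    (p v : E) (s : ℝ) :
    HasDerivAt (fun t : ℝ => f (p + t • v)) ⟪f' (p + s • v), v⟫ s := by
  have hc : HasDerivAt (fun t : ℝ => p + t • v) v s := by
    simpa using ((hasDerivAt_id s).smul_const v).const_add p
  have hf := (hasGradientAt_iff_hasFDerivAt.mp (hgrad (p + s • v)))
  have := hf.comp_hasDerivAt s hc
  simp only [InnerProductSpace.toDual_apply_apply] at this
  exact this

lemma convex_grad_ineq {f : E → ℝ} {f' : E → E} (hconv : ConvexOn ℝ Set.univ f)
    (hgrad : ∀ p, HasGradientAt f (f' p) p) (p z : E) :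
    f p + ⟪f' p, z - p⟫ ≤ f z := by
  set v := z - p with hv
  have hd : HasDerivAt (fun t : ℝ => f (p + t • v)) ⟪f' p, v⟫ 0 := by
    simpa using line_hasDerivAt hgrad p v 0
  have hslope : Filter.Tendsto (slope (fun t : ℝ => f (p + t • v)) 0) (nhdsWithin 0 {(0:ℝ)}ᶜ)
      (nhds ⟪f' p, v⟫) := hasDerivAt_iff_tendsto_slope.mp hd
  have hmono : Filter.Tendsto (slope (fun t : ℝ => f (p + t • v)) 0) (nhdsWithin 0 (Set.Ioi 0))
      (nhds ⟪f' p, v⟫) := by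
    refine hslope.mono_left (nhdsWithin_mono 0 ?_)
    intro t ht
    exact ne_of_gt (Set.mem_Ioi.mp ht)
  have hle : ⟪f' p, v⟫ ≤ f z - f p := by
    refine le_of_tendsto hmono ?_
    filter_upwards [Ioc_mem_nhdsGT_of_mem (by norm_num : (0:ℝ) ∈ Set.Ico 0 1)] with t ht
    have ht0 : 0 < t := ht.1
    have ht1 : t ≤ 1 := ht.2
    have hcv := hconv.2 (Set.mem_univ p) (Set.mem_univ z) (by linarith : (0:ℝ) ≤ 1 - t)
      (le_of_lt ht0) (by ring)
    have hpt : (1 - t) • p + t • z = p + t • v := by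
      rw [hv]; module
    rw [hpt] at hcv
    have : slope (fun t : ℝ => f (p + t • v)) 0 t = (f (p + t • v) - f p) / t := by
      simp [slope_def_field, div_eq_iff (ne_of_gt ht0)]
    rw [this, div_le_iff₀ ht0]
    simp only [smul_eq_mul] at hcv
    nlinarith
  linarith

lemma descent_lemma {f : E → ℝ} {f' : E → E} {Lf : ℝ} (hLf : 0 ≤ Lf)
    (hgrad : ∀ p, HasGradientAt f (f' p) p)
    (hlip : ∀ p q : E, ‖f' p - f' q‖ ≤ Lf * ‖p - q‖) (p z : E) :
    f z ≤ f p + ⟪f' p, z - p⟫ + Lf / 2 * ‖z - p‖ ^ 2 := by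
  set v := z - p with hv
  set ψ : ℝ → ℝ := fun t => f (p + t • v) - t * ⟪f' p, v⟫ - t ^ 2 * (Lf / 2 * ‖v‖ ^ 2) with hψ
  have hdψ : ∀ s : ℝ, HasDerivAt ψ
      (⟪f' (p + s • v), v⟫ - ⟪f' p, v⟫ - 2 * s * (Lf / 2 * ‖v‖ ^ 2)) s := by
    intro s
    have h1 := line_hasDerivAt hgrad p v s
    have h2 : HasDerivAt (fun t : ℝ => t * ⟪f' p, v⟫) ⟪f' p, v⟫ s := by
      simpa using (hasDerivAt_id s).mul_const ⟪f' p, v⟫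
    have h3 : HasDerivAt (fun t : ℝ => t ^ 2 * (Lf / 2 * ‖v‖ ^ 2))
        (2 * s * (Lf / 2 * ‖v‖ ^ 2)) s := by
      simpa using ((hasDerivAt_pow 2 s).mul_const (Lf / 2 * ‖v‖ ^ 2))
    exact (h1.sub h2).sub h3
  have hdiff : Differentiable ℝ ψ := fun s => (hdψ s).differentiableAt
  have hanti : AntitoneOn ψ (Set.Icc 0 1) := by
    apply antitoneOn_of_deriv_nonpos (convex_Icc 0 1) hdiff.continuous.continuousOn
      (hdiff.differentiableOn)
    · intro s hs
      rw [interior_Icc] at hs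
      rw [(hdψ s).deriv]
      have hin : ⟪f' (p + s • v) - f' p, v⟫ ≤ Lf * s * ‖v‖ ^ 2 := by
        calc ⟪f' (p + s • v) - f' p, v⟫ ≤ ‖f' (p + s • v) - f' p‖ * ‖v‖ :=
              real_inner_le_norm _ _
          _ ≤ (Lf * ‖(p + s • v) - p‖) * ‖v‖ := by
              apply mul_le_mul_of_nonneg_right (hlip _ _) (norm_nonneg _)
          _ = Lf * s * ‖v‖ ^ 2 := by
              rw [show (p + s • v) - p = s • v by abel, norm_smul]
              simp [abs_of_pos hs.1]
              ring
      rw [inner_sub_left] at hin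
      nlinarith [hs.1.le]
  have := hanti (Set.mem_Icc.mpr ⟨le_refl 0, zero_le_one⟩)
    (Set.mem_Icc.mpr ⟨zero_le_one, le_refl 1⟩) zero_le_one
  have h0 : ψ 0 = f p := by simp [hψ]
  have h1 : ψ 1 = f z - ⟪f' p, v⟫ - Lf / 2 * ‖v‖ ^ 2 := by
    simp [hψ, hv]
  rw [h0, h1] at this
  linarith

omit [CompleteSpace E] in
lemma inner_diff_half (a c : E) : ⟪a - c, a⟫ = (‖a‖ ^ 2 - ‖c‖ ^ 2 + ‖a - c‖ ^ 2) / 2 := by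
  have h := norm_sub_sq_real a c
  rw [inner_sub_left]
  have ha := real_inner_self_eq_norm_sq a
  have hc := real_inner_self_eq_norm_sq c
  have := real_inner_comm a c
  nlinarith

end Aux

set_option maxHeartbeats 1000000 in
lemma alm_arith (κ γ η Lf βk : ℝ) (hκ : 1 ≤ κ) (hγ : 0 < γ) (hLf : 0 ≤ Lf)
    (hη : 2 * Lf ≤ η) (hβ : κ * γ / 2 ≤ βk)
    (Fb' Fb F0 cR' cR c0 R Dq X X' Λ Λ' P : ℝ)
    (hR : 0 ≤ R) (hDq : 0 ≤ Dq)
    (hF1 : Fb' ≤ (1 - 2/(κ+1)) * Fb + (2/(κ+1)) * F0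
      + (2/(κ+1)) * (P + c0 - βk * R - (η/κ) * ((X' - X + Dq)/2))
      + Lf/2 * (2/(κ+1))^2 * Dq)
    (hF2 : Λ' = Λ - 2*(κ*γ)*P + (κ*γ)^2 * R)
    (hF3 : cR' = (1 - 2/(κ+1)) * cR + (2/(κ+1)) * c0) :
    κ*(κ+1)*(Fb' - F0 - cR') + η*X' + (1/γ)*Λ'
      ≤ (κ-1)*κ*(Fb - F0 - cR) + η*X + (1/γ)*Λ := by
  have hκ0 : 0 < κ := by linarith
  have hκ1 : 0 < κ + 1 := by linarith
  have hmul := mul_le_mul_of_nonneg_left hF1 (by positivity : (0:ℝ) ≤ κ*(κ+1))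
  have hexp : κ*(κ+1) * ((1 - 2/(κ+1)) * Fb + (2/(κ+1)) * F0
      + (2/(κ+1)) * (P + c0 - βk * R - (η/κ) * ((X' - X + Dq)/2))
      + Lf/2 * (2/(κ+1))^2 * Dq)
      = (κ-1)*κ*Fb + 2*κ*F0 + 2*κ*(P + c0) - 2*κ*βk*R - η*(X' - X + Dq)
        + (2*Lf*κ/(κ+1)) * Dq := by
    field_simp
    ring
  rw [hexp] at hmul
  have hΛ : (1/γ) * Λ' = (1/γ) * Λ - 2*κ*P + κ^2*γ*R := by
    rw [hF2]; field_simp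
  have hcR : κ*(κ+1) * cR' = (κ-1)*κ*cR + 2*κ*c0 := by
    rw [hF3]; field_simp; ring
  have hβR : κ^2*γ*R ≤ 2*κ*βk*R := by
    have := mul_le_mul_of_nonneg_left hβ (by positivity : (0:ℝ) ≤ 2*κ*R)
    nlinarith
  have hDq2 : (2*Lf*κ/(κ+1)) * Dq ≤ η * Dq := by
    apply mul_le_mul_of_nonneg_right _ hDq
    rw [div_le_iff₀ hκ1]
    nlinarith
  ring_nf at hmul hΛ hcR hβR hDq2 ⊢
  linarith

set_option maxHeartbeats 4000000 in
/-- Key telescoped bound for the accelerated linearized ALM with parameters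
`α_k = 2/(k+1)`, `γ_k = kγ`, `β_k ≥ γ_k/2`, `Pᵏ = (η/k)·I`. -/
theorem stmt_8 {E H : Type*}
    [NormedAddCommGroup E] [InnerProductSpace ℝ E] [FiniteDimensional ℝ E]
    [NormedAddCommGroup H] [InnerProductSpace ℝ H] [FiniteDimensional ℝ H]
    (A : E →L[ℝ] H) (b : H)
    (f : E → ℝ) (f' : E → E) (Lf : ℝ) (hLf : 0 ≤ Lf)
    (hfconv : ConvexOn ℝ Set.univ f)
    (hgrad : ∀ x : E, HasGradientAt f (f' x) x)
    (hlip : ∀ x x' : E, ‖f' x - f' x'‖ ≤ Lf * ‖x - x'‖)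
    (g : E → ℝ) (hgconv : ConvexOn ℝ Set.univ g)
    (γ η : ℝ) (hγ : 0 < γ) (hη : 2 * Lf ≤ η)
    (βk : ℕ → ℝ) (hβk : ∀ k : ℕ, 1 ≤ k → (k : ℝ) * γ / 2 ≤ βk k)
    (x xb : ℕ → E) (lam : ℕ → H)
    (hinit : xb 1 = x 1)
    (hopt : ∀ k : ℕ, 1 ≤ k → ∃ u : E,
      (∀ x' : E, g x' ≥ g (x (k+1)) + ⟪u, x' - x (k+1)⟫) ∧
      f' ((1 - 2 / ((k : ℝ) + 1)) • xb k + (2 / ((k : ℝ) + 1)) • x k) + u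
        - (ContinuousLinearMap.adjoint A) (lam k)
        + βk k • (ContinuousLinearMap.adjoint A) (A (x (k+1)) - b)
        + (η / (k : ℝ)) • (x (k+1) - x k) = 0)
    (hxb : ∀ k : ℕ, 1 ≤ k →
      xb (k+1) = (1 - 2 / ((k : ℝ) + 1)) • xb k + (2 / ((k : ℝ) + 1)) • x (k+1))
    (hlam : ∀ k : ℕ, 1 ≤ k → lam (k+1) = lam k - ((k : ℝ) * γ) • (A (x (k+1)) - b)) :
    ∀ t : ℕ, 1 ≤ t → ∀ x0 : E, A x0 = b → ∀ lam0 : H,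
      (t : ℝ) * ((t : ℝ) + 1)
          * ((f (xb (t+1)) + g (xb (t+1))) - (f x0 + g x0) - ⟪lam0, A (xb (t+1)) - b⟫)
        ≤ η * ‖x 1 - x0‖ ^ 2 + (1 / γ) * ‖lam 1 - lam0‖ ^ 2 := by
  intro t ht x0 hx0 lam0
  have hη0 : 0 ≤ η := by linarith
  set G : ℕ → ℝ := fun k => (f (xb k) + g (xb k)) - (f x0 + g x0) - ⟪lam0, A (xb k) - b⟫
    with hG
  set Φ : ℕ → ℝ := fun k =>
    ((k : ℝ) - 1) * (k : ℝ) * G k + η * ‖x k - x0‖ ^ 2 + (1/γ) * ‖lam k - lam0‖ ^ 2 with hΦ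
  have step : ∀ k : ℕ, 1 ≤ k → Φ (k+1) ≤ Φ k := by
    intro k hk
    have hκ : (1:ℝ) ≤ (k:ℝ) := by exact_mod_cast hk
    have hκ0 : (0:ℝ) < (k:ℝ) := by linarith
    have hκ1 : (0:ℝ) < (k:ℝ) + 1 := by linarith
    set α : ℝ := 2 / ((k:ℝ) + 1) with hα
    have hα0 : 0 < α := by positivity
    have hα1 : α ≤ 1 := by rw [hα, div_le_one hκ1]; linarith
    obtain ⟨u, hu, heq⟩ := hopt k hk
    set xh : E := (1 - α) • xb k + α • x k with hxh
    set r : H := A (x (k+1)) - b with hr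
    set Δ : E := x (k+1) - x k with hΔ
    set w : E := x (k+1) - x0 with hw
    have hxbk1 : xb (k+1) = (1 - α) • xb k + α • x (k+1) := hxb k hk
    -- descent step
    have hD := descent_lemma hLf hgrad hlip xh (xb (k+1))
    have hdiffv : xb (k+1) - xh = α • Δ := by
      rw [hxbk1, hxh, hΔ]; module
    rw [hdiffv] at hD
    have hDsc : f (xb (k+1)) ≤ f xh + α * ⟪f' xh, Δ⟫ + Lf/2 * (α^2 * ‖Δ‖^2) := by
      rw [real_inner_smul_right] at hD
      have hn : ‖α • Δ‖ ^ 2 = α^2 * ‖Δ‖^2 := by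
        rw [norm_smul, Real.norm_eq_abs, mul_pow, sq_abs]
      rw [hn] at hD
      linarith
    -- convexity of f at xh
    have hC1 := convex_grad_ineq hfconv hgrad xh (xb k)
    have hC2 := convex_grad_ineq hfconv hgrad xh x0
    have hcombv : (1 - α) • (xb k - xh) + α • (x0 - xh) = α • (x0 - x k) := by
      rw [hxh]; module
    have hinner3 : (1-α) * ⟪f' xh, xb k - xh⟫ + α * ⟪f' xh, x0 - xh⟫
        = α * ⟪f' xh, x0 - x k⟫ := by
      rw [← real_inner_smul_right, ← real_inner_smul_right, ← inner_add_right, hcombv,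
        real_inner_smul_right]
    have hcv : f xh ≤ (1-α) * f (xb k) + α * f x0 - α * ⟪f' xh, x0 - x k⟫ := by
      have h1 := mul_le_mul_of_nonneg_left hC1 (by linarith : (0:ℝ) ≤ 1 - α)
      have h2 := mul_le_mul_of_nonneg_left hC2 hα0.le
      nlinarith [h1, h2, hinner3]
    have hwid : ⟪f' xh, Δ⟫ - ⟪f' xh, x0 - x k⟫ = ⟪f' xh, w⟫ := by
      rw [← inner_sub_right]
      congr 1
      rw [hΔ, hw]; abel
    -- f bound towards w
    have hfF : f (xb (k+1)) ≤ (1-α) * f (xb k) + α * f x0 + α * ⟪f' xh, w⟫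
        + Lf/2 * (α^2 * ‖Δ‖^2) := by
      have := hwid
      nlinarith [hDsc, hcv, hwid]
    -- g bounds
    have hg1 : g (x (k+1)) ≤ g x0 + ⟪u, w⟫ := by
      have h := hu x0
      rw [show x0 - x (k+1) = -w by rw [hw]; abel, inner_neg_right] at h
      linarith
    have hg2 : g (xb (k+1)) ≤ (1-α) * g (xb k) + α * g (x (k+1)) := by
      have := hgconv.2 (Set.mem_univ (xb k)) (Set.mem_univ (x (k+1)))
        (by linarith : (0:ℝ) ≤ 1 - α) hα0.le (by ring)
      rw [hxbk1]
      simpa using this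
    have hgF : g (xb (k+1)) ≤ (1-α) * g (xb k) + α * g x0 + α * ⟪u, w⟫ := by
      nlinarith [hg1, hg2]
    -- optimality inner products
    have hAw : A w = r := by rw [hw, map_sub, hx0, hr]
    have hip0 := congrArg (fun z : E => ⟪z, w⟫) heq
    simp only [inner_add_left, inner_sub_left, real_inner_smul_left, inner_zero_left] at hip0
    rw [ContinuousLinearMap.adjoint_inner_left, ContinuousLinearMap.adjoint_inner_left,
      hAw] at hip0
    have hrr : ⟪r, r⟫ = ‖r‖^2 := real_inner_self_eq_norm_sq r
    have hlsplit : ⟪lam k, r⟫ = ⟪lam k - lam0, r⟫ + ⟪lam0, r⟫ := by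
      rw [inner_sub_left]; ring
    have hΔw : ⟪Δ, w⟫ = (‖w‖^2 - ‖x k - x0‖^2 + ‖Δ‖^2)/2 := by
      have h := inner_diff_half w (x k - x0)
      rw [show w - (x k - x0) = Δ by rw [hw, hΔ]; abel] at h
      exact h
    have hIP : ⟪f' xh, w⟫ + ⟪u, w⟫ = ⟪lam k - lam0, r⟫ + ⟪lam0, r⟫ - βk k * ‖r‖^2
        - (η/(k:ℝ)) * ((‖w‖^2 - ‖x k - x0‖^2 + ‖Δ‖^2)/2) := by
      rw [← hΔw, ← hrr, ← hlsplit]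
      linarith [hip0]
    -- F1 assembled
    have hF1 : (f (xb (k+1)) + g (xb (k+1)))
        ≤ (1 - α) * (f (xb k) + g (xb k)) + α * (f x0 + g x0)
          + α * (⟪lam k - lam0, r⟫ + ⟪lam0, r⟫ - βk k * ‖r‖^2
            - (η/(k:ℝ)) * ((‖w‖^2 - ‖x k - x0‖^2 + ‖Δ‖^2)/2))
          + Lf/2 * α^2 * ‖Δ‖^2 := by
      have hIPα : α * (⟪f' xh, w⟫ + ⟪u, w⟫) = α * (⟪lam k - lam0, r⟫ + ⟪lam0, r⟫
          - βk k * ‖r‖^2 - (η/(k:ℝ)) * ((‖w‖^2 - ‖x k - x0‖^2 + ‖Δ‖^2)/2)) := by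
        rw [hIP]
      nlinarith [hfF, hgF, hIPα]
    -- lambda identity
    have hF2 : ‖lam (k+1) - lam0‖^2 = ‖lam k - lam0‖^2
        - 2*((k:ℝ)*γ)*⟪lam k - lam0, r⟫ + ((k:ℝ)*γ)^2 * ‖r‖^2 := by
      have hl : lam (k+1) - lam0 = (lam k - lam0) - ((k:ℝ)*γ) • r := by
        rw [hlam k hk, hr]; abel
      rw [hl, norm_sub_sq_real, real_inner_smul_right, norm_smul, Real.norm_eq_abs,
        mul_pow, sq_abs]
      ring
    -- multiplier/residual combination
    have hF3 : ⟪lam0, A (xb (k+1)) - b⟫ = (1 - α) * ⟪lam0, A (xb k) - b⟫ + α * ⟪lam0, r⟫ := by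
      have hA : A (xb (k+1)) - b = (1-α) • (A (xb k) - b) + α • r := by
        rw [hxbk1, map_add, ContinuousLinearMap.map_smul, ContinuousLinearMap.map_smul, hr]
        module
      rw [hA, inner_add_right, real_inner_smul_right, real_inner_smul_right]
    have harith := alm_arith (k:ℝ) γ η Lf (βk k) hκ hγ hLf hη (hβk k hk)
      (f (xb (k+1)) + g (xb (k+1))) (f (xb k) + g (xb k)) (f x0 + g x0)
      ⟪lam0, A (xb (k+1)) - b⟫ ⟪lam0, A (xb k) - b⟫ ⟪lam0, r⟫
      (‖r‖^2) (‖Δ‖^2) (‖x k - x0‖^2) (‖w‖^2) (‖lam k - lam0‖^2) (‖lam (k+1) - lam0‖^2)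
      ⟪lam k - lam0, r⟫ (by positivity) (by positivity)
      (by rw [← hα]; linarith [hF1]) hF2 hF3
    -- translate to Φ
    have hwx : w = x (k+1) - x0 := hw
    simp only [hΦ, hG]
    push_cast
    rw [← hwx]
    linarith [harith]
  -- telescoping
  have tele : ∀ s : ℕ, 1 ≤ s → Φ (s+1) ≤ Φ 1 := by
    intro s hs
    induction s with
    | zero => omega
    | succ n ih =>
      rcases Nat.eq_or_lt_of_le hs with h1 | h2
      · rw [← h1] at *
        exact step 1 le_rfl
      · have hn : 1 ≤ n := by omega
        exact le_trans (step (n+1) (by omega)) (ih hn)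
  have hΦ1 : Φ 1 = η * ‖x 1 - x0‖ ^ 2 + (1 / γ) * ‖lam 1 - lam0‖ ^ 2 := by
    simp [hΦ]
  have hfin := le_trans (tele t ht) (le_of_eq hΦ1)
  have hΦt : ((t:ℝ)) * ((t:ℝ) + 1) * G (t+1) ≤ Φ (t+1) := by
    simp only [hΦ]
    push_cast
    have h1 : (0:ℝ) ≤ η * ‖x (t+1) - x0‖ ^ 2 := by positivity
    have h2 : (0:ℝ) ≤ (1/γ) * ‖lam (t+1) - lam0‖ ^ 2 := by positivity
    nlinarith [h1, h2]
  simp only [hG] at hΦt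
  exact le_trans hΦt hfin
end
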